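/- Let s ∈ ℝ^N be a strong-decaying signal with decay factor p > 1, i.e., |s|_{(l)} ≥ p·|s|_{(l+1)} for 1 ≤ l ≤ N−1, with best K-term approximation s_K and tail s_K^c = s − s_K. Then ‖s_K^c‖₁ / (√K · ‖s‖₂) ≤ √((p+1)/(K(p−1))) · p^{−K}. -/

import Mathlib

open Matrix Finset

/-- The ℓ₂ norm of a finite real vector. -/
noncomputable def l2 {n : ℕ} (v : Fin n → ℝ) : ℝ := Real.sqrt (∑ i, (v i) ^ 2)

/-- The ℓ₁ norm of a finite real vector. -/
noncomputable def l1 {n : ℕ} (v : Fin n → ℝ) : ℝ := ∑ i, |v i|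

/-- A vector is `K`-sparse if it has at most `K` nonzero entries. -/
def IsSparse {n : ℕ} (K : ℕ) (v : Fin n → ℝ) : Prop :=
  ∃ S : Finset (Fin n), S.card ≤ K ∧ ∀ i ∉ S, v i = 0

/-- `A` satisfies the RIP of order `K` with constant `δ`. -/
def SatisfiesRIP {m n : ℕ} (A : Matrix (Fin m) (Fin n) ℝ) (K : ℕ) (δ : ℝ) : Prop :=
  ∀ v : Fin n → ℝ, IsSparse K v →
    (1 - δ) * (l2 v) ^ 2 ≤ (l2 (A.mulVec v)) ^ 2 ∧
      (l2 (A.mulVec v)) ^ 2 ≤ (1 + δ) * (l2 v) ^ 2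

/-- Spectral norm (ℓ₂ operator norm) of a matrix. -/
noncomputable def specNorm {m n : ℕ} (A : Matrix (Fin m) (Fin n) ℝ) : ℝ :=
  sSup {c | ∃ v : Fin n → ℝ, l2 v ≤ 1 ∧ c = l2 (A.mulVec v)}

/-- The matrix with the columns of `A` indexed by `S` kept and all other columns zeroed,
representing the column-submatrix `A_S`. -/
def colRestrict {m n : ℕ} (A : Matrix (Fin m) (Fin n) ℝ) (S : Finset (Fin n)) :
    Matrix (Fin m) (Fin n) ℝ := fun i j => if j ∈ S then A i j else 0

/-- `‖A‖₂^{(K)}`: the largest spectral norm over all `K`-column submatrices of `A`. -/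
noncomputable def subNorm {m n : ℕ} (A : Matrix (Fin m) (Fin n) ℝ) (K : ℕ) : ℝ :=
  sSup {c | ∃ S : Finset (Fin n), S.card = K ∧ c = specNorm (colRestrict A S)}

/-- The pseudo-inverse `(BᵀB)⁻¹Bᵀ` of a full-column-rank matrix `B`. -/
noncomputable def pinv {m k : ℕ} (B : Matrix (Fin m) (Fin k) ℝ) : Matrix (Fin k) (Fin m) ℝ :=
  (Bᵀ * B)⁻¹ * Bᵀ

/-- `sK` is a best `K`-term (ℓ₂) approximation of `s`. -/
def IsBestApprox {n : ℕ} (K : ℕ) (s sK : Fin n → ℝ) : Prop :=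
  IsSparse K sK ∧ ∀ t : Fin n → ℝ, IsSparse K t → l2 (s - sK) ≤ l2 (s - t)

/-- Embed a vector indexed by `Fin k` into `Fin n` along an injection `f` (zero elsewhere). -/
noncomputable def embedVec {k n : ℕ} (f : Fin k → Fin n) (w : Fin k → ℝ) : Fin n → ℝ :=
  fun j => ∑ i, if f i = j then w i else 0



open Finset

section Aux
variable {p : ℝ} (hp : 1 < p) (N : ℕ) (a : ℕ → ℝ)
  (h0 : ∀ i, 0 ≤ a i) (hdec : ∀ i, p * a (i+1) ≤ a i)

include hp h0 hdec

lemma geom_bound : ∀ m i, p ^ m * a (i + m) ≤ a i := by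
  intro m
  induction m with
  | zero => intro i; simp
  | succ m ih =>
    intro i
    have h1 : p ^ (m+1) * a (i + (m+1)) = p ^ m * (p * a (i + m + 1)) := by ring_nf
    rw [h1]
    calc p ^ m * (p * a (i + m + 1)) ≤ p ^ m * a (i + m) := by
          apply mul_le_mul_of_nonneg_left (hdec (i+m)) (by positivity)
      _ ≤ a i := ih i

lemma tail_bound : ∀ d i, N ≤ i + d → (p - 1) * (∑ j ∈ Ico i N, a j) ≤ p * a i := by
  intro d
  induction d with
  | zero =>
    intro i hi
    rw [Ico_eq_empty (by omega), sum_empty, mul_zero]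
    have := h0 i; nlinarith
  | succ d ih =>
    intro i hi
    by_cases hiN : N ≤ i
    · rw [Ico_eq_empty (by omega), sum_empty, mul_zero]
      have := h0 i; nlinarith
    · push_neg at hiN
      rw [Finset.sum_eq_sum_Ico_succ_bot hiN]
      have h2 := ih (i+1) (by omega)
      have h3 := hdec i
      have := h0 i
      nlinarith

lemma sq_tail_bound : ∀ d i, N ≤ i + d →
    (∑ j ∈ Ico i N, a j) ^ 2 ≤ (p + 1) / (p - 1) * ∑ j ∈ Ico i N, (a j) ^ 2 := by
  intro d
  induction d with
  | zero =>
    intro i hi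
    rw [Ico_eq_empty (by omega), sum_empty]
    norm_num
  | succ d ih =>
    intro i hi
    by_cases hiN : N ≤ i
    · rw [Ico_eq_empty (by omega), sum_empty]; norm_num
    · push_neg at hiN
      rw [Finset.sum_eq_sum_Ico_succ_bot hiN (f := a),
        Finset.sum_eq_sum_Ico_succ_bot hiN (f := fun j => (a j)^2)]
      have h2 := ih (i+1) (by omega)
      have h3 := tail_bound hp N a h0 hdec d (i+1) (by omega)
      have h4 := hdec i
      have h5 := h0 i
      have h6 : (0:ℝ) ≤ ∑ j ∈ Ico (i+1) N, a j := Finset.sum_nonneg fun j _ => h0 j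
      have hpos : (0:ℝ) < p - 1 := by linarith
      rw [add_sq, mul_add]
      have key : 2 * a i * (∑ j ∈ Ico (i+1) N, a j) ≤ (p+1)/(p-1) * (a i)^2 - (a i)^2 := by
        have h7 : (p-1) * (∑ j ∈ Ico (i+1) N, a j) ≤ a i := h3.trans h4
        have h8 : (p+1)/(p-1) * (a i)^2 - (a i)^2 = 2/(p-1) * (a i)^2 := by
          field_simp; ring
        rw [h8, div_mul_eq_mul_div, le_div_iff₀ hpos]
        nlinarith
      linarith

end Aux

/-- For a strong-decaying signal, the relative ℓ₁ tail satisfies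
`‖s_K^c‖₁/(√K‖s‖₂) ≤ √((p+1)/(K(p-1)))·p^{-K}`. -/
theorem stmt6 {N : ℕ} (s : Fin N → ℝ) (hs : s ≠ 0) (p : ℝ) (hp : 1 < p)
    (hdecay : ∀ l : Fin N, ∀ hl : (l : ℕ) + 1 < N, |s l| ≥ p * |s ⟨(l : ℕ) + 1, hl⟩|)
    (K : ℕ) (hK1 : 1 ≤ K) (hKN : K ≤ N) :
    l1 (fun i => if (i : ℕ) < K then 0 else s i) / (Real.sqrt K * l2 s) ≤
      Real.sqrt ((p + 1) / (K * (p - 1))) * p ^ (-(K : ℤ)) := by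
  have hp0 : (0:ℝ) < p := by linarith
  have hp1 : (0:ℝ) < p - 1 := by linarith
  set a : ℕ → ℝ := fun i => if h : i < N then |s ⟨i, h⟩| else 0 with ha
  have h0 : ∀ i, 0 ≤ a i := by
    intro i; simp only [ha]
    split
    · exact abs_nonneg _
    · exact le_rfl
  have hdec : ∀ i, p * a (i+1) ≤ a i := by
    intro i
    by_cases h : i + 1 < N
    · have hi : i < N := by omega
      simp only [ha, dif_pos h, dif_pos hi]
      exact hdecay ⟨i, hi⟩ h
    · simp only [ha, dif_neg h, mul_zero]
      exact h0 i
  -- l1 of the tail equals the Ico sum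
  have hT : l1 (fun i : Fin N => if (i : ℕ) < K then 0 else s i)
      = ∑ j ∈ Ico K N, a j := by
    unfold l1
    have : ∀ i : Fin N, |if (i : ℕ) < K then 0 else s i|
        = (fun j => if j < K then 0 else a j) (i : ℕ) := by
      intro i
      by_cases h : (i : ℕ) < K <;> simp [h, ha, i.isLt]
    rw [Finset.sum_congr rfl (fun i _ => this i),
      Fin.sum_univ_eq_sum_range (fun j => if j < K then 0 else a j) N,
      Finset.range_eq_Ico, ← Finset.sum_Ico_consecutive _ (Nat.zero_le K) hKN]
    have h1 : ∑ j ∈ Ico 0 K, (if j < K then (0:ℝ) else a j) = 0 := by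
      apply Finset.sum_eq_zero
      intro j hj
      simp [Finset.mem_Ico.mp hj |>.2]
    have h2 : ∑ j ∈ Ico K N, (if j < K then (0:ℝ) else a j) = ∑ j ∈ Ico K N, a j := by
      apply Finset.sum_congr rfl
      intro j hj
      simp [Nat.not_lt.mpr (Finset.mem_Ico.mp hj).1]
    rw [h1, h2, zero_add]
  -- l2 s squared equals the range sum of a^2
  have hL2 : (l2 s) ^ 2 = ∑ j ∈ Finset.range N, (a j) ^ 2 := by
    unfold l2
    rw [Real.sq_sqrt (by positivity)]
    have : ∀ i : Fin N, (s i) ^ 2 = (fun j => (a j) ^ 2) (i : ℕ) := by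
      intro i; simp [ha, i.isLt, sq_abs]
    rw [Finset.sum_congr rfl (fun i _ => this i),
      Fin.sum_univ_eq_sum_range (fun j => (a j) ^ 2) N]
  -- shift bound
  have hshift : ∑ j ∈ Ico K N, (a j) ^ 2 ≤ ((p ^ K)⁻¹) ^ 2 * (l2 s) ^ 2 := by
    have step : ∀ j ∈ Ico K N, (a j) ^ 2 ≤ ((p ^ K)⁻¹) ^ 2 * (a (j - K)) ^ 2 := by
      intro j hj
      have hjK : K ≤ j := (Finset.mem_Ico.mp hj).1
      have := geom_bound hp a h0 hdec K (j - K)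
      rw [Nat.sub_add_cancel hjK] at this
      have hpK : (0:ℝ) < p ^ K := by positivity
      have hj0 := h0 j
      rw [← mul_pow]
      apply pow_le_pow_left₀ hj0
      calc a j = (p ^ K)⁻¹ * (p ^ K * a j) := by field_simp
        _ ≤ (p ^ K)⁻¹ * a (j - K) := mul_le_mul_of_nonneg_left this (by positivity)
    calc ∑ j ∈ Ico K N, (a j) ^ 2 ≤ ∑ j ∈ Ico K N, ((p ^ K)⁻¹) ^ 2 * (a (j - K)) ^ 2 :=
          Finset.sum_le_sum step
      _ = ((p ^ K)⁻¹) ^ 2 * ∑ j ∈ Ico K N, (a (j - K)) ^ 2 := by rw [Finset.mul_sum]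
      _ ≤ ((p ^ K)⁻¹) ^ 2 * (l2 s) ^ 2 := by
          apply mul_le_mul_of_nonneg_left _ (by positivity)
          rw [hL2, Finset.sum_Ico_eq_sum_range]
          have : ∀ j ∈ Finset.range (N - K), (a (K + j - K)) ^ 2 = (a j) ^ 2 := by
            intro j _; congr 2; omega
          rw [Finset.sum_congr rfl this]
          apply Finset.sum_le_sum_of_subset_of_nonneg
          · exact Finset.range_subset_range.mpr (Nat.sub_le N K)
          · intro j _ _; positivity
  -- combine: T^2 bound
  have hT2 : (∑ j ∈ Ico K N, a j) ^ 2
      ≤ (p + 1) / (p - 1) * (((p ^ K)⁻¹) ^ 2 * (l2 s) ^ 2) := by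
    calc (∑ j ∈ Ico K N, a j) ^ 2
        ≤ (p + 1) / (p - 1) * ∑ j ∈ Ico K N, (a j) ^ 2 :=
          sq_tail_bound hp N a h0 hdec N K (by omega)
      _ ≤ (p + 1) / (p - 1) * (((p ^ K)⁻¹) ^ 2 * (l2 s) ^ 2) := by
          apply mul_le_mul_of_nonneg_left hshift (by positivity)
  -- l2 s > 0
  have hl2pos : 0 < l2 s := by
    obtain ⟨i, hi⟩ := Function.ne_iff.mp hs
    unfold l2
    apply Real.sqrt_pos.mpr
    apply Finset.sum_pos' (fun j _ => by positivity)
    exact ⟨i, Finset.mem_univ i, by simpa [sq_abs] using pow_pos (abs_pos.mpr hi) 2⟩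
  have hKpos : (0:ℝ) < Real.sqrt K := Real.sqrt_pos.mpr (by exact_mod_cast hK1)
  rw [hT, div_le_iff₀ (by positivity)]
  have hB : Real.sqrt ((p + 1) / (K * (p - 1))) * p ^ (-(K:ℤ)) * (Real.sqrt K * l2 s)
      = Real.sqrt ((p + 1) / (p - 1)) * ((p ^ K)⁻¹ * l2 s) := by
    rw [_root_.zpow_neg, zpow_natCast]
    have : Real.sqrt ((p + 1) / (K * (p - 1))) * Real.sqrt K
        = Real.sqrt ((p + 1) / (p - 1)) := by
      rw [← Real.sqrt_mul (by positivity)]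
      congr 1
      have hK0 : (0:ℝ) < (K:ℝ) := by exact_mod_cast hK1
      field_simp
    calc Real.sqrt ((p + 1) / (K * (p - 1))) * (p ^ K)⁻¹ * (Real.sqrt K * l2 s)
        = (Real.sqrt ((p + 1) / (K * (p - 1))) * Real.sqrt K) * ((p ^ K)⁻¹ * l2 s) := by
          ring
      _ = Real.sqrt ((p + 1) / (p - 1)) * ((p ^ K)⁻¹ * l2 s) := by rw [this]
  rw [hB]
  have hTnn : 0 ≤ ∑ j ∈ Ico K N, a j := Finset.sum_nonneg fun j _ => h0 j
  have hBnn : 0 ≤ Real.sqrt ((p + 1) / (p - 1)) * ((p ^ K)⁻¹ * l2 s) := by positivity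
  have hB2 : (Real.sqrt ((p + 1) / (p - 1)) * ((p ^ K)⁻¹ * l2 s)) ^ 2
      = (p + 1) / (p - 1) * (((p ^ K)⁻¹) ^ 2 * (l2 s) ^ 2) := by
    rw [mul_pow, mul_pow, Real.sq_sqrt (by positivity)]
  nlinarith [hT2, hTnn, hBnn, hB2]
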